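/- Let b be an odd positive integer and E = {1, 3, 5, ..., b}. There exists a unique matrix of rational numbers [c_{λ,β}]_{λ,β ∈ E} such that for every β ∈ E and every z, sin^b(z)·cot_β(z) = Σ_{λ ∈ E} c_{λ,β}·(e^{iλz} + e^{-iλz}). Moreover this matrix is invertible. -/

import Mathlib

open Real Polynomial

/-- `cotIter β z` is `cot_β(z) = ((-1)^(β-1)/(β-1)!) · d^{β-1}/dz^{β-1} (cot z)`. -/
noncomputable def cotIter (β : ℕ) (z : ℝ) : ℝ :=
  ((-1:ℝ)^(β-1) / (β-1).factorial) *
    iteratedDeriv (β-1) (fun t => Real.cos t / Real.sin t) z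

/-- The matrix property: for every odd `β = 2j+1 ∈ E = {1,3,…,b}` and every `z`,
`sin^b(z)·cot_β(z) = Σ_{λ∈E} c_{λ,β}·(e^{iλz} + e^{-iλz})`. -/
def SinCotMatrixProp (b : ℕ) (c : Matrix (Fin ((b+1)/2)) (Fin ((b+1)/2)) ℚ) : Prop :=
  ∀ j : Fin ((b+1)/2), ∀ z : ℝ, Real.sin z ≠ 0 →
    ((Real.sin z ^ b * cotIter (2*(j:ℕ)+1) z : ℝ) : ℂ) =
      ∑ i : Fin ((b+1)/2), (c i j : ℂ) *
        (Complex.exp ((2*(i:ℕ)+1) * z * Complex.I) +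
         Complex.exp (-((2*(i:ℕ)+1) * z * Complex.I)))

open LaurentPolynomial



/-! ### Part 1: the cotangent derivative polynomials -/

noncomputable def QQ : ℕ → Polynomial ℚ
  | 0 => X
  | (k+1) => -(1 + X^2) * (QQ k).derivative

lemma QQ_natDegree_le (k : ℕ) : (QQ k).natDegree ≤ k + 1 := by
  induction k with
  | zero => simp [QQ]
  | succ k ih =>
    rw [QQ]
    refine (natDegree_mul_le).trans ?_
    have h1 : (-(1 + X^2) : ℚ[X]).natDegree ≤ 2 := by
      rw [natDegree_neg]
      refine (natDegree_add_le _ _).trans ?_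
      simp
    have h2 : (QQ k).derivative.natDegree ≤ k := by
      refine (natDegree_derivative_le _).trans ?_
      omega
    omega

lemma QQ_coeff_top (k : ℕ) : (QQ k).coeff (k+1) = (-1)^k * k.factorial := by
  induction k with
  | zero => simp [QQ]
  | succ k ih =>
    rw [QQ]
    have hd : (QQ k).derivative.natDegree ≤ k := by
      refine (natDegree_derivative_le _).trans ?_; have := QQ_natDegree_le k; omega
    have expand : (-(1 + X^2) * (QQ k).derivative : ℚ[X]) =
        -(QQ k).derivative - X^2 * (QQ k).derivative := by ring
    rw [expand, coeff_sub, coeff_neg]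
    have h1 : (QQ k).derivative.coeff (k+1+1) = 0 :=
      coeff_eq_zero_of_natDegree_lt (by omega)
    have h2 : (X^2 * (QQ k).derivative).coeff (k+2) = (QQ k).derivative.coeff k := by
      rw [coeff_X_pow_mul]
    rw [h1, h2, coeff_derivative, ih]
    push_cast [Nat.factorial_succ]
    ring

lemma QQ_coeff_parity (k t : ℕ) (h : (t + k) % 2 = 0) : (QQ k).coeff t = 0 := by
  induction k generalizing t with
  | zero =>
    rw [QQ, coeff_X]
    have : ¬ (1 = t) := by omega
    simp [this]
  | succ k ih =>
    have expand : (QQ (k+1) : ℚ[X]) = -(QQ k).derivative - X^2 * (QQ k).derivative := by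
      rw [QQ]; ring
    rw [expand, coeff_sub, coeff_neg, coeff_derivative]
    have h1 : (QQ k).coeff (t+1) = 0 := ih (t+1) (by omega)
    have h2 : (X^2 * (QQ k).derivative).coeff t = 0 := by
      rw [mul_comm, coeff_mul_X_pow']
      rcases Nat.lt_or_ge t 2 with ht | ht
      · simp [Nat.not_le.mpr ht]
      · obtain ⟨s, rfl⟩ : ∃ s, t = s + 2 := ⟨t - 2, by omega⟩
        simp only [if_pos (by omega : 2 ≤ s + 2), Nat.add_sub_cancel]
        rw [coeff_derivative, ih (s+1) (by omega)]
        simp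
    rw [h1, h2]
    simp

noncomputable def QR (k : ℕ) : Polynomial ℝ := (QQ k).map (algebraMap ℚ ℝ)

lemma isOpen_sin_ne : IsOpen {z : ℝ | Real.sin z ≠ 0} :=
  isOpen_ne.preimage Real.continuous_sin

lemma iteratedDeriv_cot (k : ℕ) (z : ℝ) (hz : Real.sin z ≠ 0) :
    iteratedDeriv k (fun t => Real.cos t / Real.sin t) z
      = (QR k).eval (Real.cos z / Real.sin z) := by
  induction k generalizing z with
  | zero => simp [QR, QQ]
  | succ k ih =>
    rw [iteratedDeriv_succ]
    have hev : iteratedDeriv k (fun t => Real.cos t / Real.sin t)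
        =ᶠ[nhds z] fun w => (QR k).eval (Real.cos w / Real.sin w) := by
      filter_upwards [isOpen_sin_ne.mem_nhds hz] with w hw
      exact ih w hw
    rw [hev.deriv_eq]
    have h1 : HasDerivAt (fun w => Real.cos w / Real.sin w)
        ((-Real.sin z * Real.sin z - Real.cos z * Real.cos z) / Real.sin z ^ 2) z :=
      (Real.hasDerivAt_cos z).div (Real.hasDerivAt_sin z) hz
    have h2 : HasDerivAt (fun w => (QR k).eval (Real.cos w / Real.sin w))
        ((QR k).derivative.eval (Real.cos z / Real.sin z) *
          ((-Real.sin z * Real.sin z - Real.cos z * Real.cos z) / Real.sin z ^ 2)) z :=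
      by have := ((QR k).hasDerivAt (Real.cos z / Real.sin z)).comp z h1; exact this
    rw [h2.deriv]
    have hQ : QR (k+1) = -(1 + X^2) * (QR k).derivative := by
      rw [QR, QQ, Polynomial.map_mul, Polynomial.map_neg, Polynomial.map_add,
        Polynomial.map_one, Polynomial.map_pow, Polynomial.map_X, ← derivative_map, QR]
    rw [hQ]
    have hsc : Real.sin z ^ 2 + Real.cos z ^ 2 = 1 := Real.sin_sq_add_cos_sq z
    have : (-Real.sin z * Real.sin z - Real.cos z * Real.cos z) / Real.sin z ^ 2
        = -(1 + (Real.cos z / Real.sin z)^2) := by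
      field_simp
      nlinarith [hsc]
    rw [this]
    simp only [eval_mul, eval_neg, eval_add, eval_one, eval_pow, eval_X]
    ring

/-! ### Part 2: symmetric Laurent polynomials -/

noncomputable def esym (μ : ℤ) : LaurentPolynomial ℚ := T μ + T (-μ)

def SymB (d : ℕ) (f : LaurentPolynomial ℚ) : Prop :=
  (∀ μ, f.coeff (-μ) = f.coeff μ) ∧ ∀ μ : ℤ, f.coeff μ ≠ 0 → μ.natAbs ≤ d ∧ μ % 2 = (d : ℤ) % 2

lemma SymB.mul {a b : ℕ} {f g : LaurentPolynomial ℚ} (hf : SymB a f) (hg : SymB b g) :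
    SymB (a + b) (f * g) := by
  classical
  constructor
  · have hif : invert f = f := LaurentPolynomial.ext fun μ => by
      rw [invert_apply, hf.1]
    have hig : invert g = g := LaurentPolynomial.ext fun μ => by
      rw [invert_apply, hg.1]
    intro μ
    conv_rhs => rw [← hif, ← hig, ← map_mul]
    rw [invert_apply]
  · intro μ hμ
    have hmem : μ ∈ (f * g).coeff.support := Finsupp.mem_support_iff.mpr hμ
    have := AddMonoidAlgebra.support_coeff_mul_subset f g hmem
    rw [Finset.mem_add] at this
    obtain ⟨x, hx, y, hy, rfl⟩ := this
    have hx' := hf.2 x (Finsupp.mem_support_iff.mp hx)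
    have hy' := hg.2 y (Finsupp.mem_support_iff.mp hy)
    omega

lemma one_apply_LP (μ : ℤ) : (1 : LaurentPolynomial ℚ).coeff μ = if (0:ℤ) = μ then 1 else 0 := by
  conv_lhs => rw [← single_zero_one_eq_one]
  rw [AddMonoidAlgebra.coeff_single, Finsupp.single_apply]

lemma two_apply_LP (μ : ℤ) : (2 : LaurentPolynomial ℚ).coeff μ = if (0:ℤ) = μ then 2 else 0 := by
  have h : (2 : LaurentPolynomial ℚ) = 1 + 1 := by norm_num
  rw [h, AddMonoidAlgebra.coeff_add, Finsupp.add_apply, one_apply_LP]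
  split_ifs <;> norm_num

lemma SymB.pow {a : ℕ} {f : LaurentPolynomial ℚ} (hf : SymB a f) (m : ℕ) :
    SymB (m * a) (f ^ m) := by
  induction m with
  | zero =>
    rw [pow_zero]
    constructor
    · intro μ
      rw [one_apply_LP, one_apply_LP]
      split_ifs <;> first | rfl | omega
    · intro μ hμ
      rw [one_apply_LP] at hμ
      split_ifs at hμ with h
      · constructor <;> omega
      · simp at hμ
  | succ m ih =>
    rw [pow_succ, show (m+1)*a = m*a + a from by ring]
    exact ih.mul hf

lemma symB_esym_one : SymB 1 (esym 1) := by
  have key : ∀ μ : ℤ, (esym 1).coeff μ = (if (1:ℤ) = μ then (1:ℚ) else 0) +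
      (if (-1:ℤ) = μ then 1 else 0) := by
    intro μ
    rw [esym, AddMonoidAlgebra.coeff_add, Finsupp.add_apply, T_apply, T_apply]
  constructor
  · intro μ
    rw [key, key]
    split_ifs <;> first | omega | norm_num
  · intro μ hμ
    rw [key] at hμ
    by_contra hcon
    apply hμ
    rw [if_neg (by omega), if_neg (by omega)]
    norm_num

lemma symB_esym_two : SymB 2 (esym 2 - 2) := by
  have key : ∀ μ : ℤ, (esym 2 - 2).coeff μ = (if (2:ℤ) = μ then (1:ℚ) else 0) +
      (if (-2:ℤ) = μ then 1 else 0) - (if (0:ℤ) = μ then 2 else 0) := by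
    intro μ
    rw [esym, AddMonoidAlgebra.coeff_sub, Finsupp.sub_apply, AddMonoidAlgebra.coeff_add, Finsupp.add_apply, T_apply, T_apply, two_apply_LP]
  constructor
  · intro μ
    rw [key, key]
    split_ifs <;> first | omega | norm_num
  · intro μ hμ
    rw [key] at hμ
    by_contra hcon
    apply hμ
    rw [if_neg (by omega), if_neg (by omega), if_neg (by omega)]
    norm_num

/-! ### Part 3: evaluation of Laurent polynomials as trigonometric sums -/

noncomputable def expHom : Multiplicative ℤ →* (ℝ → ℂ) where
  toFun μ := fun z => Complex.exp ((Multiplicative.toAdd μ : ℤ) * z * Complex.I)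
  map_one' := by
    funext z; show Complex.exp (((0:ℤ):ℂ) * z * Complex.I) = 1; simp
  map_mul' := by
    intro a b; funext z
    show Complex.exp (((Multiplicative.toAdd a + Multiplicative.toAdd b : ℤ) : ℂ) * z * Complex.I)
      = Complex.exp _ * Complex.exp _
    rw [← Complex.exp_add]; push_cast; ring_nf

noncomputable def ψ : LaurentPolynomial ℚ →ₐ[ℚ] (ℝ → ℂ) :=
  AddMonoidAlgebra.lift ℚ (ℝ → ℂ) ℤ expHom

lemma ψ_T (μ : ℤ) (z : ℝ) : ψ (T μ) z = Complex.exp (μ * z * Complex.I) := by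
  rw [ψ, T, AddMonoidAlgebra.lift_single]
  show (1:ℚ) • Complex.exp _ = _
  rw [one_smul]; rfl

lemma ψ_apply (f : LaurentPolynomial ℚ) (z : ℝ) :
    ψ f z = ∑ μ ∈ f.coeff.support, (f.coeff μ : ℂ) * Complex.exp (μ * z * Complex.I) := by
  rw [ψ, AddMonoidAlgebra.lift_apply, Finsupp.sum, Finset.sum_apply]
  refine Finset.sum_congr rfl fun μ hμ => ?_
  show (f.coeff μ) • Complex.exp _ = _
  rw [Rat.smul_def]; rfl

lemma sym_eval {b : ℕ} (hb : b % 2 = 1) {f : LaurentPolynomial ℚ} (hf : SymB b f) (z : ℝ) :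
    ψ f z = ∑ i : Fin ((b+1)/2), ((f.coeff (2*(i:ℕ)+1) : ℚ) : ℂ) *
      (Complex.exp ((2*(i:ℕ)+1) * z * Complex.I) +
       Complex.exp (-((2*(i:ℕ)+1) * z * Complex.I))) := by
  classical
  set n := (b+1)/2 with hn
  set S1 : Finset ℤ := (Finset.range n).image (fun i : ℕ => (2*(i:ℤ)+1)) with hS1
  set S2 : Finset ℤ := (Finset.range n).image (fun i : ℕ => -(2*(i:ℤ)+1)) with hS2
  have hsub : f.coeff.support ⊆ S1 ∪ S2 := by
    intro μ hμ
    have h := hf.2 μ (Finsupp.mem_support_iff.mp hμ)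
    rw [Finset.mem_union, hS1, hS2]
    rcases le_or_gt 0 μ with h0 | h0
    · left
      rw [Finset.mem_image]
      refine ⟨(μ.toNat - 1)/2, Finset.mem_range.mpr (by omega), by omega⟩
    · right
      rw [Finset.mem_image]
      refine ⟨((-μ).toNat - 1)/2, Finset.mem_range.mpr (by omega), by omega⟩
  rw [ψ_apply]
  rw [Finset.sum_subset hsub (fun μ _ hμ => by
    rw [Finsupp.notMem_support_iff.mp hμ]; simp)]
  have hdisj : Disjoint S1 S2 := by
    rw [Finset.disjoint_left]
    intro μ h1 h2
    rw [hS1, Finset.mem_image] at h1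
    rw [hS2, Finset.mem_image] at h2
    obtain ⟨i, _, rfl⟩ := h1
    obtain ⟨j, _, hj⟩ := h2
    omega
  rw [Finset.sum_union hdisj]
  have e1 : ∑ μ ∈ S1, (f.coeff μ : ℂ) * Complex.exp (μ * z * Complex.I)
      = ∑ i ∈ Finset.range n, (f.coeff (2*i+1) : ℂ) *
          Complex.exp ((2*(i:ℕ)+1) * z * Complex.I) := by
    rw [hS1, Finset.sum_image (by intro a _ b _ h; have h' : (2*(a:ℤ)+1) = 2*(b:ℤ)+1 := h; omega)]
    refine Finset.sum_congr rfl fun i _ => ?_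
    push_cast
    ring_nf
  have e2 : ∑ μ ∈ S2, (f.coeff μ : ℂ) * Complex.exp (μ * z * Complex.I)
      = ∑ i ∈ Finset.range n, (f.coeff (2*i+1) : ℂ) *
          Complex.exp (-((2*(i:ℕ)+1) * z * Complex.I)) := by
    rw [hS2, Finset.sum_image (by intro a _ b _ h; have h' : -(2*(a:ℤ)+1) = -(2*(b:ℤ)+1) := h; omega)]
    refine Finset.sum_congr rfl fun i _ => ?_
    rw [hf.1 (2*(i:ℤ)+1)]
    push_cast
    ring_nf
  rw [e1, e2, ← Finset.sum_add_distrib]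
  rw [Fin.sum_univ_eq_sum_range (fun i : ℕ => ((f.coeff (2*(i:ℤ)+1) : ℚ) : ℂ) *
      (Complex.exp ((2*(i:ℕ)+1) * (z:ℂ) * Complex.I) +
       Complex.exp (-((2*(i:ℕ)+1) * (z:ℂ) * Complex.I)))) n]
  refine Finset.sum_congr rfl fun i _ => ?_
  ring

lemma ψ_esym_one (z : ℝ) : ψ (esym 1) z = 2 * (Real.cos z : ℂ) := by
  rw [esym, map_add, Pi.add_apply, ψ_T, ψ_T]
  rw [Complex.ofReal_cos, Complex.cos]
  push_cast
  ring

lemma ψ_esym_two_sub (z : ℝ) : ψ (esym 2 - 2) z = -4 * (Real.sin z : ℂ)^2 := by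
  rw [map_sub, esym, map_add, Pi.sub_apply, Pi.add_apply, ψ_T, ψ_T]
  have h2 : (ψ (2 : LaurentPolynomial ℚ)) z = 2 := by
    rw [map_ofNat]; rfl
  rw [h2]
  rw [Complex.ofReal_sin, Complex.sin]
  have huv : Complex.exp (-(z:ℂ) * Complex.I) * Complex.exp ((z:ℂ) * Complex.I) = 1 := by
    rw [← Complex.exp_add]; ring_nf; exact Complex.exp_zero
  have h2z : Complex.exp (((2:ℤ):ℂ) * z * Complex.I)
      = Complex.exp ((z:ℂ) * Complex.I) * Complex.exp ((z:ℂ) * Complex.I) := by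
    rw [← Complex.exp_add]; push_cast; ring_nf
  have h2z' : Complex.exp (((-2:ℤ):ℂ) * z * Complex.I)
      = Complex.exp (-(z:ℂ) * Complex.I) * Complex.exp (-(z:ℂ) * Complex.I) := by
    rw [← Complex.exp_add]; push_cast; ring_nf
  rw [h2z, h2z']
  have hI : (Complex.I)^2 = -1 := Complex.I_sq
  set u := Complex.exp ((z:ℂ) * Complex.I)
  set v := Complex.exp (-(z:ℂ) * Complex.I)
  linear_combination (2:ℂ) * huv + ((v - u)^2) * hI

/-! ### Part 4: existence -/

noncomputable def gLau (b t : ℕ) : LaurentPolynomial ℚ :=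
  (esym 2 - 2)^((b-t)/2) * (esym 1)^t

lemma symB_gLau {b t : ℕ} (hb : b % 2 = 1) (ht : t % 2 = 1) (htb : t ≤ b) :
    SymB b (gLau b t) := by
  have h := (symB_esym_two.pow ((b-t)/2)).mul (symB_esym_one.pow t)
  rwa [show (b-t)/2 * 2 + t * 1 = b from by omega] at h

lemma bridge {b t : ℕ} (hb : b % 2 = 1) (ht : t % 2 = 1) (htb : t ≤ b) (z : ℝ) :
    ((Real.sin z ^ (b - t) * Real.cos z ^ t : ℝ) : ℂ)
      = ((((-1:ℚ)^((b-t)/2) / 2^b) : ℚ) : ℂ) * ψ (gLau b t) z := by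
  have hm : b - t = 2 * ((b-t)/2) := by omega
  set m := (b-t)/2 with hmdef
  have hψ : ψ (gLau b t) z = (-4 * (Real.sin z : ℂ)^2)^m * (2 * (Real.cos z : ℂ))^t := by
    rw [gLau, map_mul, Pi.mul_apply, map_pow, map_pow, Pi.pow_apply, Pi.pow_apply,
      ψ_esym_one, ψ_esym_two_sub]
  rw [hψ]
  have h2b : (2:ℂ)^b = 4^m * 2^t := by
    rw [show (4:ℂ) = 2^2 from by norm_num, ← pow_mul, ← pow_add]
    congr 1
    omega
  have h4 : ((-4 : ℂ))^m = (-1)^m * 4^m := by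
    rw [← neg_one_mul, mul_pow]
  push_cast
  rw [hm, pow_mul, mul_pow, mul_pow]
  have hneg : ((-1:ℂ))^m * (-4)^m = (4:ℂ)^m := by rw [← mul_pow]; norm_num
  have h2bne : (2:ℂ)^b ≠ 0 := pow_ne_zero _ two_ne_zero
  have h4ne : (4:ℂ)^m ≠ 0 := pow_ne_zero _ (by norm_num)
  have h2tne : (2:ℂ)^t ≠ 0 := pow_ne_zero _ two_ne_zero
  rw [h2b]
  field_simp
  linear_combination (-(Complex.sin (z:ℂ) ^ (m*2) * Complex.cos (z:ℂ) ^ t)) * hneg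

noncomputable def PP (β : ℕ) : Polynomial ℚ :=
  Polynomial.C ((-1:ℚ)^(β-1) / (β-1).factorial) * QQ (β-1)

lemma PP_natDegree_le (β : ℕ) (hβ : 1 ≤ β) : (PP β).natDegree ≤ β := by
  rw [PP]
  refine (natDegree_C_mul_le _ _).trans ?_
  have := QQ_natDegree_le (β-1)
  omega

lemma PP_coeff_even (β t : ℕ) (hβ : β % 2 = 1) (ht : t % 2 = 0) : (PP β).coeff t = 0 := by
  rw [PP, coeff_C_mul, QQ_coeff_parity (β-1) t (by omega), mul_zero]

/-- the matrix -/
noncomputable def cmat (b : ℕ) : Matrix (Fin ((b+1)/2)) (Fin ((b+1)/2)) ℚ :=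
  fun i j => ∑ t ∈ Finset.range (b+1),
    (PP (2*(j:ℕ)+1)).coeff t * ((-1:ℚ)^((b-t)/2) / 2^b * (gLau b t).coeff (2*(i:ℕ)+1))

lemma cotIter_eval (β : ℕ) (hβ : 1 ≤ β) (z : ℝ) (hz : Real.sin z ≠ 0) :
    cotIter β z = ((PP β).map (algebraMap ℚ ℝ)).eval (Real.cos z / Real.sin z) := by
  rw [cotIter, iteratedDeriv_cot _ _ hz, PP, Polynomial.map_mul, Polynomial.map_C,
    eval_mul, eval_C, ← QR]
  congr 1
  rw [show algebraMap ℚ ℝ ((-1:ℚ)^(β-1) / (β-1).factorial)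
    = (((-1:ℚ)^(β-1) / (β-1).factorial : ℚ) : ℝ) from eq_ratCast _ _]
  push_cast
  ring

lemma sin_pow_cot_pow {b t : ℕ} (ht : t ≤ b) {z : ℝ} (hz : Real.sin z ≠ 0) :
    Real.sin z ^ b * (Real.cos z / Real.sin z)^t = Real.sin z ^ (b-t) * Real.cos z ^ t := by
  rw [div_pow]
  rw [show b = (b-t) + t from by omega, pow_add]
  field_simp
  ring
  rw [Nat.add_sub_cancel]

lemma cmat_prop (b : ℕ) (hb : b % 2 = 1) : SinCotMatrixProp b (cmat b) := by
  intro j z hz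
  have hβ : 2*(j:ℕ)+1 ≤ b := by have := j.2; omega
  have hreal : Real.sin z ^ b * cotIter (2*(j:ℕ)+1) z
      = ∑ t ∈ Finset.range (b+1), ((PP (2*(j:ℕ)+1)).coeff t : ℝ) *
          (Real.sin z ^ (b-t) * Real.cos z ^ t) := by
    rw [cotIter_eval _ (by omega) z hz]
    have hd : ((PP (2*(j:ℕ)+1)).map (algebraMap ℚ ℝ)).natDegree < b + 1 := by
      have h1 : ((PP (2*(j:ℕ)+1)).map (algebraMap ℚ ℝ)).natDegree ≤ (PP (2*(j:ℕ)+1)).natDegree :=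
        natDegree_map_le
      have h2 := PP_natDegree_le (2*(j:ℕ)+1) (by omega)
      omega
    rw [Polynomial.eval_eq_sum_range' (n := b+1) hd]
    rw [Finset.mul_sum]
    refine Finset.sum_congr rfl fun t htm => ?_
    rw [Finset.mem_range] at htm
    rw [Polynomial.coeff_map,
      show algebraMap ℚ ℝ ((PP (2*(j:ℕ)+1)).coeff t) = (((PP (2*(j:ℕ)+1)).coeff t : ℚ) : ℝ)
        from eq_ratCast _ _]
    rw [← sin_pow_cot_pow (by omega : t ≤ b) hz]
    ring
  rw [hreal]
  push_cast
  have hterm : ∀ t ∈ Finset.range (b+1),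
      (((PP (2*(j:ℕ)+1)).coeff t : ℚ) : ℂ) * (Complex.sin (z:ℂ) ^ (b-t) * Complex.cos (z:ℂ) ^ t)
      = ∑ i : Fin ((b+1)/2),
          ((((PP (2*(j:ℕ)+1)).coeff t * ((-1:ℚ)^((b-t)/2) / 2^b * (gLau b t).coeff (2*(i:ℕ)+1))) : ℚ) : ℂ)
          * (Complex.exp ((2*(i:ℕ)+1) * z * Complex.I) +
             Complex.exp (-((2*(i:ℕ)+1) * z * Complex.I))) := by
    intro t htm
    rw [Finset.mem_range] at htm
    rcases Nat.even_or_odd t with he | ho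
    · have h0 : (PP (2*(j:ℕ)+1)).coeff t = 0 :=
        PP_coeff_even (2*(j:ℕ)+1) t (by omega) (Nat.even_iff.mp he)
      rw [h0]
      push_cast
      simp
    · have ht1 : t % 2 = 1 := Nat.odd_iff.mp ho
      have hbr := bridge hb ht1 (by omega) z
      have hsymm := sym_eval hb (symB_gLau hb ht1 (by omega)) z
      have : (Complex.sin (z:ℂ) ^ (b-t) * Complex.cos (z:ℂ) ^ t)
          = ((((-1:ℚ)^((b-t)/2) / 2^b) : ℚ) : ℂ) * ψ (gLau b t) z := by
        rw [← hbr]; push_cast; ring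
      rw [this, hsymm, Finset.mul_sum, Finset.mul_sum]
      refine Finset.sum_congr rfl fun i _ => ?_
      push_cast
      ring
  rw [Finset.sum_congr rfl hterm, Finset.sum_comm]
  refine Finset.sum_congr rfl fun i _ => ?_
  rw [show ((cmat b i j : ℚ) : ℂ)
      = ∑ t ∈ Finset.range (b+1),
          ((((PP (2*(j:ℕ)+1)).coeff t * ((-1:ℚ)^((b-t)/2) / 2^b * (gLau b t).coeff (2*(i:ℕ)+1))) : ℚ) : ℂ)
      from by rw [cmat]; push_cast; rfl]
  rw [Finset.sum_mul]

/-! ### Part 5: analytic lemmas -/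

lemma dense_sin_ne : Dense {z : ℝ | Real.sin z ≠ 0} := by
  have hc : {z : ℝ | Real.sin z = 0}.Countable := by
    have hsub : {z : ℝ | Real.sin z = 0} ⊆ Set.range (fun n : ℤ => (n:ℝ) * π) := by
      intro z hz
      obtain ⟨n, hn⟩ := Real.sin_eq_zero_iff.mp hz
      exact ⟨n, hn⟩
    exact (Set.countable_range _).mono hsub
  exact hc.dense_compl ℝ

lemma eq_on_dense {α : Type*} [TopologicalSpace α] [T2Space α] {F G : ℝ → α}
    (hF : Continuous F) (hG : Continuous G) (h : ∀ z, Real.sin z ≠ 0 → F z = G z) :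
    ∀ z, F z = G z := by
  have := Continuous.ext_on dense_sin_ne hF hG (fun z hz => h z hz)
  exact fun z => congrFun this z

lemma hasDerivAt_cexp_real (c : ℂ) (z : ℝ) :
    HasDerivAt (fun z : ℝ => Complex.exp (c * z)) (c * Complex.exp (c * z)) z := by
  have h1 : HasDerivAt (fun z : ℝ => (z:ℂ)) 1 z := by
    simpa using (hasDerivAt_id z).ofReal_comp
  have h2 : HasDerivAt (fun z : ℝ => c * (z:ℂ)) c z := by
    simpa using h1.const_mul c
  simpa [mul_comm] using h2.cexp

lemma iteratedDeriv_zero_fun (m : ℕ) : iteratedDeriv m (fun _ : ℝ => (0:ℂ)) = fun _ => 0 := by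
  induction m with
  | zero => rw [iteratedDeriv_zero]
  | succ m ih =>
    rw [iteratedDeriv_succ, ih]
    funext z
    exact deriv_const _ _

lemma indep {n : ℕ} (d : Fin n → ℚ)
    (h : ∀ z : ℝ, ∑ i : Fin n, (d i : ℂ) *
      (Complex.exp ((2*(i:ℕ)+1) * z * Complex.I) +
       Complex.exp (-((2*(i:ℕ)+1) * z * Complex.I))) = 0) :
    d = 0 := by
  classical
  set c : Fin n → ℂ := fun i => ((2*(i:ℕ)+1 : ℕ) : ℂ) * Complex.I with hc
  set c' : Fin n → ℂ := fun i => -(((2*(i:ℕ)+1 : ℕ) : ℂ) * Complex.I) with hc'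
  set F : ℝ → ℂ := fun z => ∑ i : Fin n, (d i : ℂ) *
      (Complex.exp (c i * z) + Complex.exp (c' i * z)) with hF
  have hF0 : F = fun _ => (0:ℂ) := by
    funext z
    rw [hF, ← h z]
    refine Finset.sum_congr rfl fun i _ => ?_
    rw [hc, hc']
    push_cast
    ring_nf
  have key : ∀ m : ℕ, iteratedDeriv m F = fun z : ℝ => ∑ i : Fin n, (d i : ℂ) *
      ((c i)^m * Complex.exp (c i * z) + (c' i)^m * Complex.exp (c' i * z)) := by
    intro m
    induction m with
    | zero =>
      rw [iteratedDeriv_zero, hF]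
      funext z
      refine Finset.sum_congr rfl fun i _ => ?_
      simp
    | succ m ih =>
      rw [iteratedDeriv_succ, ih]
      funext z
      have hder : HasDerivAt (fun z : ℝ => ∑ i : Fin n, (d i : ℂ) *
          ((c i)^m * Complex.exp (c i * z) + (c' i)^m * Complex.exp (c' i * z)))
          (∑ i : Fin n, (d i : ℂ) *
          ((c i)^m * (c i * Complex.exp (c i * z)) + (c' i)^m * (c' i * Complex.exp (c' i * z)))) z := by
        refine HasDerivAt.fun_sum fun i _ => ?_
        exact ((((hasDerivAt_cexp_real (c i) z).const_mul ((c i)^m))).add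
          (((hasDerivAt_cexp_real (c' i) z).const_mul ((c' i)^m)))).const_mul _
      rw [hder.deriv]
      refine Finset.sum_congr rfl fun i _ => ?_
      ring
  have keyz : ∀ m : ℕ, ∑ i : Fin n, (d i : ℂ) * ((c i)^m + (c' i)^m) = 0 := by
    intro m
    have h1 := congrFun (key m) 0
    rw [hF0, iteratedDeriv_zero_fun] at h1
    have h2 : (0:ℂ) = ∑ i : Fin n, (d i : ℂ) *
        ((c i)^m * Complex.exp (c i * 0) + (c' i)^m * Complex.exp (c' i * 0)) := h1
    rw [h2]
    refine Finset.sum_congr rfl fun i _ => ?_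
    norm_num
  have keyt : ∀ t : ℕ, ∑ i : Fin n, d i * (((2*(i:ℕ)+1 : ℕ)^2 : ℕ) : ℚ)^t = 0 := by
    intro t
    have h1 := keyz (2*t)
    have h2 : ∀ i : Fin n, (c i)^(2*t) + (c' i)^(2*t)
        = 2 * (-1)^t * ((((2*(i:ℕ)+1 : ℕ)^2 : ℕ) : ℂ))^t := by
      intro i
      rw [hc, hc']
      rw [show (-(((2*(i:ℕ)+1 : ℕ) : ℂ) * Complex.I))^(2*t)
          = ((((2*(i:ℕ)+1 : ℕ) : ℂ) * Complex.I))^(2*t) from Even.neg_pow (even_two_mul t) _]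
      rw [mul_pow, pow_mul, pow_mul, Complex.I_sq]
      push_cast
      ring
    rw [Finset.sum_congr rfl (fun i _ => by rw [h2 i])] at h1
    have h3 : (2 * (-1:ℂ)^t) * ∑ i : Fin n, (d i : ℂ) * ((((2*(i:ℕ)+1 : ℕ)^2 : ℕ) : ℂ))^t = 0 := by
      rw [Finset.mul_sum, ← h1]
      exact Finset.sum_congr rfl fun i _ => by ring
    have h4 : (2 * (-1:ℂ)^t) ≠ 0 := by
      apply mul_ne_zero two_ne_zero
      exact pow_ne_zero _ (by norm_num)
    have h5 := (mul_eq_zero.mp h3).resolve_left h4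
    have h6 : ((∑ i : Fin n, d i * (((2*(i:ℕ)+1 : ℕ)^2 : ℕ) : ℚ)^t : ℚ) : ℂ) = 0 := by
      push_cast
      push_cast at h5
      exact h5
    exact_mod_cast h6
  -- Vandermonde
  set x : Fin n → ℚ := fun i => (((2*(i:ℕ)+1 : ℕ)^2 : ℕ) : ℚ) with hx
  set M : Matrix (Fin n) (Fin n) ℚ := Matrix.vandermonde x with hM
  have hvec : Matrix.vecMul d M = 0 := by
    funext t
    rw [hM, Matrix.vecMul, Pi.zero_apply]
    have := keyt (t:ℕ)
    rw [← this]
    rfl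
  have hdet : M.det ≠ 0 := by
    rw [hM, Matrix.det_vandermonde_ne_zero_iff]
    intro i j hij
    simp only [hx, Nat.cast_inj] at hij
    have : (2*(i:ℕ)+1)^2 = (2*(j:ℕ)+1)^2 := hij
    have h1 : 2*(i:ℕ)+1 = 2*(j:ℕ)+1 := Nat.pow_left_injective (by norm_num) this
    ext
    omega
  have hunit : IsUnit M.det := isUnit_iff_ne_zero.mpr hdet
  have : d = Matrix.vecMul d (M * M⁻¹) := by
    rw [Matrix.mul_nonsing_inv M hunit, Matrix.vecMul_one]
  rw [← Matrix.vecMul_vecMul, hvec, Matrix.zero_vecMul] at this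
  exact this

/-! ### Part 6: invertibility -/

lemma PP_coeff_self (β : ℕ) (hβ : 1 ≤ β) : (PP β).coeff β = 1 := by
  obtain ⟨k, rfl⟩ : ∃ k, β = k + 1 := ⟨β - 1, by omega⟩
  rw [PP]
  simp only [Nat.add_sub_cancel]
  rw [coeff_C_mul, QQ_coeff_top k]
  have hfac : ((k.factorial : ℚ)) ≠ 0 := Nat.cast_ne_zero.mpr k.factorial_ne_zero
  have hneg : ((-1:ℚ))^k * (-1)^k = 1 := by
    rw [← pow_add]; exact Even.neg_one_pow ⟨k, rfl⟩
  field_simp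
  linear_combination hneg

noncomputable def wfun (β : ℕ) (z : ℝ) : ℝ :=
  ∑ t ∈ Finset.range (β+1), ((PP β).coeff t : ℝ) * (Real.sin z ^ (β - t) * Real.cos z ^ t)

lemma wfun_cont (β : ℕ) : Continuous (wfun β) := by
  apply continuous_finset_sum
  intro t _
  fun_prop

lemma wfun_zero (β : ℕ) (hβ : 1 ≤ β) : wfun β 0 = 1 := by
  rw [wfun, Finset.sum_eq_single β]
  · rw [PP_coeff_self β hβ]
    simp
  · intro t ht hne
    rw [Finset.mem_range] at ht
    have h0 : β - t ≠ 0 := by omega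
    simp [Real.sin_zero, zero_pow h0]
  · intro hmem
    exact absurd (Finset.self_mem_range_succ β) hmem

lemma sin_pow_cotIter (b β : ℕ) (hβ : 1 ≤ β) (hβb : β ≤ b) (z : ℝ) (hz : Real.sin z ≠ 0) :
    Real.sin z ^ b * cotIter β z = Real.sin z ^ (b - β) * wfun β z := by
  rw [cotIter_eval β hβ z hz]
  have hd : ((PP β).map (algebraMap ℚ ℝ)).natDegree < β + 1 := by
    have h1 : ((PP β).map (algebraMap ℚ ℝ)).natDegree ≤ (PP β).natDegree := natDegree_map_le
    have h2 := PP_natDegree_le β hβ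
    omega
  rw [Polynomial.eval_eq_sum_range' (n := β+1) hd]
  rw [wfun, Finset.mul_sum, Finset.mul_sum]
  refine Finset.sum_congr rfl fun t htm => ?_
  rw [Finset.mem_range] at htm
  rw [Polynomial.coeff_map,
    show algebraMap ℚ ℝ ((PP β).coeff t) = (((PP β).coeff t : ℚ) : ℝ) from eq_ratCast _ _]
  have h1 := sin_pow_cot_pow (show t ≤ b by omega) hz
  have h2 : Real.sin z ^ (b - t) = Real.sin z ^ (b - β) * Real.sin z ^ (β - t) := by
    rw [← pow_add]
    congr 1
    omega
  calc Real.sin z ^ b * (((PP β).coeff t : ℝ) * (Real.cos z / Real.sin z) ^ t)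
      = ((PP β).coeff t : ℝ) * (Real.sin z ^ b * (Real.cos z / Real.sin z) ^ t) := by ring
    _ = ((PP β).coeff t : ℝ) * (Real.sin z ^ (b - t) * Real.cos z ^ t) := by rw [h1]
    _ = Real.sin z ^ (b - β) * (((PP β).coeff t : ℝ) * (Real.sin z ^ (β - t) * Real.cos z ^ t)) := by
        rw [h2]; ring

lemma vzero (b : ℕ) (hb : b % 2 = 1) (v : Fin ((b+1)/2) → ℚ)
    (hv : ∀ z : ℝ, Real.sin z ≠ 0 →
      ∑ j : Fin ((b+1)/2), (v j : ℝ) * (Real.sin z ^ b * cotIter (2*(j:ℕ)+1) z) = 0) :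
    v = 0 := by
  classical
  have main : ∀ (J : Fin ((b+1)/2)), (∀ j' : Fin ((b+1)/2), (J:ℕ) < (j':ℕ) → v j' = 0) → v J = 0 := by
    intro J hJ
    set W : ℝ → ℝ := fun z => ∑ j : Fin ((b+1)/2), (if (j:ℕ) ≤ (J:ℕ) then
        (v j : ℝ) * Real.sin z ^ (2*((J:ℕ)-(j:ℕ))) * wfun (2*(j:ℕ)+1) z else 0) with hW
    have hWcont : Continuous W := by
      rw [hW]
      apply continuous_finset_sum
      intro j _
      by_cases h : (j:ℕ) ≤ (J:ℕ)
      · simp only [if_pos h]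
        have := wfun_cont (2*(j:ℕ)+1)
        fun_prop
      · simp only [if_neg h]
        exact continuous_const
    have hWzero : ∀ z, Real.sin z ≠ 0 → W z = 0 := by
      intro z hz
      have h1 := hv z hz
      have h2 : ∑ j : Fin ((b+1)/2), (v j : ℝ) * (Real.sin z ^ b * cotIter (2*(j:ℕ)+1) z)
          = Real.sin z ^ (b - (2*(J:ℕ)+1)) * W z := by
        simp only [hW]
        rw [Finset.mul_sum]
        refine Finset.sum_congr rfl fun j _ => ?_
        by_cases h : (j:ℕ) ≤ (J:ℕ)
        · rw [if_pos h]
          rw [sin_pow_cotIter b (2*(j:ℕ)+1) (by omega) (by have := j.2; omega) z hz]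
          rw [show b - (2*(j:ℕ)+1) = (b - (2*(J:ℕ)+1)) + 2*((J:ℕ)-(j:ℕ)) from by
            have hJ2 := J.2; have hj2 := j.2; omega, pow_add]
          ring
        · rw [if_neg h, hJ j (by omega)]
          simp
      rw [h2] at h1
      rcases mul_eq_zero.mp h1 with h | h
      · exact absurd h (pow_ne_zero _ hz)
      · exact h
    have hW0 : W 0 = (v J : ℝ) := by
      simp only [hW]
      rw [Finset.sum_eq_single J]
      · rw [if_pos le_rfl, Nat.sub_self]
        rw [wfun_zero (2*(J:ℕ)+1) (by omega)]
        norm_num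
      · intro j _ hne
        by_cases h : (j:ℕ) ≤ (J:ℕ)
        · rw [if_pos h]
          have hlt : (j:ℕ) < (J:ℕ) := by
            rcases Nat.lt_or_ge (j:ℕ) (J:ℕ) with h' | h'
            · exact h'
            · exfalso; apply hne; ext; omega
          have hexp : 2*((J:ℕ)-(j:ℕ)) ≠ 0 := by omega
          rw [Real.sin_zero, zero_pow hexp]
          ring
        · rw [if_neg h]
      · intro hmem
        exact absurd (Finset.mem_univ J) hmem
    have hz := eq_on_dense hWcont continuous_const (G := fun _ => (0:ℝ)) hWzero 0
    have : (v J : ℝ) = 0 := by rw [← hW0]; exact hz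
    exact_mod_cast this
  have step : ∀ k : ℕ, ∀ j : Fin ((b+1)/2), ((b+1)/2) - (j:ℕ) ≤ k → v j = 0 := by
    intro k
    induction k with
    | zero =>
      intro j hj
      have := j.2
      omega
    | succ k ih =>
      intro j hj
      rcases Nat.lt_or_ge (((b+1)/2) - (j:ℕ)) (k+1) with h | h
      · exact ih j (by omega)
      · apply main j
        intro j' hj'
        exact ih j' (by omega)
  funext j
  rw [Pi.zero_apply]
  exact step ((b+1)/2) j (by omega)

theorem stmt_5 (b : ℕ) (hb : Odd b) (hb1 : 1 ≤ b) :
    (∃! c : Matrix (Fin ((b+1)/2)) (Fin ((b+1)/2)) ℚ, SinCotMatrixProp b c) ∧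
    (∀ c : Matrix (Fin ((b+1)/2)) (Fin ((b+1)/2)) ℚ, SinCotMatrixProp b c →
      IsUnit c) := by
  have hbm : b % 2 = 1 := Nat.odd_iff.mp hb
  constructor
  · refine ⟨cmat b, cmat_prop b hbm, ?_⟩
    intro c' hc'
    have hij : ∀ j i : Fin ((b+1)/2), c' i j = cmat b i j := by
      intro j
      set d : Fin ((b+1)/2) → ℚ := fun i => c' i j - cmat b i j with hd
      have hFz : ∀ z : ℝ, Real.sin z ≠ 0 →
          (∑ i : Fin ((b+1)/2), (d i : ℂ) *
            (Complex.exp ((2*(i:ℕ)+1) * z * Complex.I) +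
             Complex.exp (-((2*(i:ℕ)+1) * z * Complex.I)))) = 0 := by
        intro z hz
        have h1 := hc' j z hz
        have h2 := cmat_prop b hbm j z hz
        have h3 : ∑ i : Fin ((b+1)/2), (d i : ℂ) *
            (Complex.exp ((2*(i:ℕ)+1) * z * Complex.I) +
             Complex.exp (-((2*(i:ℕ)+1) * z * Complex.I)))
            = (∑ i : Fin ((b+1)/2), (c' i j : ℂ) *
            (Complex.exp ((2*(i:ℕ)+1) * z * Complex.I) +
             Complex.exp (-((2*(i:ℕ)+1) * z * Complex.I))))
            - (∑ i : Fin ((b+1)/2), (cmat b i j : ℂ) *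
            (Complex.exp ((2*(i:ℕ)+1) * z * Complex.I) +
             Complex.exp (-((2*(i:ℕ)+1) * z * Complex.I)))) := by
          rw [← Finset.sum_sub_distrib]
          refine Finset.sum_congr rfl fun i _ => ?_
          rw [hd]
          push_cast
          ring
        rw [h3, ← h1, ← h2, sub_self]
      have hFc : Continuous (fun z : ℝ => ∑ i : Fin ((b+1)/2), (d i : ℂ) *
          (Complex.exp ((2*(i:ℕ)+1) * z * Complex.I) +
           Complex.exp (-((2*(i:ℕ)+1) * z * Complex.I)))) := by
        apply continuous_finset_sum
        intro i _
        apply Continuous.mul continuous_const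
        apply Continuous.add
        · exact Complex.continuous_exp.comp (by fun_prop)
        · exact Complex.continuous_exp.comp (by fun_prop)
      have hFall := eq_on_dense hFc continuous_const (G := fun _ => (0:ℂ)) hFz
      have hd0 := indep d hFall
      intro i
      have := congrFun hd0 i
      rw [hd] at this
      simp only [Pi.zero_apply] at this
      linarith [this]
    funext i j
    exact hij j i
  · intro c hc
    have hdet : c.det ≠ 0 := by
      intro hdet0
      obtain ⟨v, hv0, hveq⟩ := Matrix.exists_mulVec_eq_zero_iff.mpr hdet0
      apply hv0
      apply vzero b hbm v
      intro z hz
      have key : ((∑ j : Fin ((b+1)/2), (v j : ℝ) *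
          (Real.sin z ^ b * cotIter (2*(j:ℕ)+1) z) : ℝ) : ℂ) = 0 := by
        have e1 : ((∑ j : Fin ((b+1)/2), (v j : ℝ) *
            (Real.sin z ^ b * cotIter (2*(j:ℕ)+1) z) : ℝ) : ℂ)
            = ∑ j : Fin ((b+1)/2), (v j : ℂ) *
              ((Real.sin z ^ b * cotIter (2*(j:ℕ)+1) z : ℝ) : ℂ) := by
          rw [Complex.ofReal_sum]
          refine Finset.sum_congr rfl fun jj _ => ?_
          push_cast
          ring
        rw [e1]
        have e2 : ∑ j : Fin ((b+1)/2), (v j : ℂ) *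
              ((Real.sin z ^ b * cotIter (2*(j:ℕ)+1) z : ℝ) : ℂ)
            = ∑ j : Fin ((b+1)/2), (v j : ℂ) *
              ∑ i : Fin ((b+1)/2), (c i j : ℂ) *
                (Complex.exp ((2*(i:ℕ)+1) * z * Complex.I) +
                 Complex.exp (-((2*(i:ℕ)+1) * z * Complex.I))) := by
          refine Finset.sum_congr rfl fun jj _ => ?_
          rw [hc jj z hz]
        rw [e2]
        have e3 : ∑ j : Fin ((b+1)/2), (v j : ℂ) *
              ∑ i : Fin ((b+1)/2), (c i j : ℂ) *
                (Complex.exp ((2*(i:ℕ)+1) * z * Complex.I) +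
                 Complex.exp (-((2*(i:ℕ)+1) * z * Complex.I)))
            = ∑ i : Fin ((b+1)/2), ((Matrix.mulVec c v i : ℚ) : ℂ) *
                (Complex.exp ((2*(i:ℕ)+1) * z * Complex.I) +
                 Complex.exp (-((2*(i:ℕ)+1) * z * Complex.I))) := by
          rw [Finset.sum_congr rfl (fun jj (_ : jj ∈ Finset.univ) => Finset.mul_sum
            (Finset.univ) (fun i => (c i jj : ℂ) *
                (Complex.exp ((2*(i:ℕ)+1) * z * Complex.I) +
                 Complex.exp (-((2*(i:ℕ)+1) * z * Complex.I)))) ((v jj : ℂ)))]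
          rw [Finset.sum_comm]
          refine Finset.sum_congr rfl fun i _ => ?_
          have hmv : ((Matrix.mulVec c v i : ℚ) : ℂ) = ∑ x : Fin ((b+1)/2), (c i x : ℂ) * (v x : ℂ) := by
            have h0 : Matrix.mulVec c v i = ∑ x : Fin ((b+1)/2), c i x * v x := rfl
            rw [h0]
            push_cast
            rfl
          rw [hmv, Finset.sum_mul]
          refine Finset.sum_congr rfl fun x _ => by ring
        rw [e3, hveq]
        simp
      exact_mod_cast key
    exact (Matrix.isUnit_iff_isUnit_det c).mpr (isUnit_iff_ne_zero.mpr hdet)
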